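/- Let X be a compact metric space and m, n ∈ ℕ with n ≥ 1. The set 𝒰ₘⁿ = {f ∈ C(X,X) : Perₙ(f) is finite with exactly m elements} is a Borel subset of C(X,X), where Perₙ(f) = {x ∈ X : f^[n] x = x and f^[k] x ≠ x for all 0 < k < n} is the set of periodic points of f of least period n. -/

import Mathlib

open MeasureTheory

section Aux

variable {X : Type} [MetricSpace X] [CompactSpace X]

/-- positive lower bound of the form 1/(i+1) for a finite family of positive reals -/
lemma aux_exists_one_div_le {β : Type*} (s : Finset β) (g : β → ℝ)
    (h : ∀ b ∈ s, 0 < g b) : ∃ i : ℕ, ∀ b ∈ s, 1 / ((i : ℝ) + 1) ≤ g b := by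
  rcases s.eq_empty_or_nonempty with rfl | hs
  · exact ⟨0, by simp⟩
  · obtain ⟨b0, hb0, hmin⟩ := s.exists_min_image g hs
    obtain ⟨i, hi⟩ := exists_nat_one_div_lt (h b0 hb0)
    exact ⟨i, fun b hb => hi.le.trans (hmin b hb)⟩

lemma aux_card_char (S : Set X) (m : ℕ) :
    (S.Finite ∧ S.ncard = m) ↔
      ((∃ t : Finset X, t.card = m ∧ ↑t ⊆ S) ∧
        ¬ (∃ t : Finset X, t.card = m + 1 ∧ ↑t ⊆ S)) := by
  constructor
  · rintro ⟨hfin, hcard⟩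
    refine ⟨⟨hfin.toFinset, by rw [← Set.ncard_eq_toFinset_card _ hfin]; exact hcard, by simp⟩, ?_⟩
    rintro ⟨t, htc, hts⟩
    have := Set.ncard_le_ncard hts hfin
    rw [Set.ncard_coe_finset, htc, hcard] at this
    omega
  · rintro ⟨⟨t, htc, hts⟩, hno⟩
    have hfin : S.Finite := by
      by_contra hinf
      obtain ⟨u, hus, hufin, hucard⟩ :=
        (Set.Infinite.exists_subset_ncard_eq (hinf : S.Infinite) (m + 1))
      exact hno ⟨hufin.toFinset, by rw [← Set.ncard_eq_toFinset_card _ hufin]; exact hucard,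
        by simpa using hus⟩
    refine ⟨hfin, ?_⟩
    have h1 : m ≤ S.ncard := by
      have := Set.ncard_le_ncard hts hfin
      rwa [Set.ncard_coe_finset, htc] at this
    have h2 : S.ncard ≤ m := by
      by_contra h
      obtain ⟨u, hus, hucard⟩ := Set.exists_subset_card_eq (show m + 1 ≤ S.ncard by omega)
      have hufin : u.Finite := hfin.subset hus
      refine hno ⟨hufin.toFinset, ?_, by simpa using hus⟩
      rw [← Set.ncard_eq_toFinset_card _ hufin]; exact hucard
    omega

end Aux

section Top

variable {X : Type} [MetricSpace X] [CompactSpace X]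

lemma aux_iter_cont (l : ℕ) : Continuous fun p : C(X, X) × X => (⇑p.1)^[l] p.2 := by
  induction l with
  | zero => simpa using continuous_snd
  | succ l ih =>
    have he : (fun p : C(X, X) × X => (⇑p.1)^[l + 1] p.2)
        = fun p : C(X, X) × X => p.1 ((⇑p.1)^[l] p.2) := by
      funext p
      exact Function.iterate_succ_apply' _ _ _
    rw [he]
    exact continuous_eval.comp (continuous_fst.prodMk ih)

lemma aux_K_closed (k n i j : ℕ) :
    IsClosed {f : C(X, X) | ∃ x : Fin k → X,
      (∀ a b : Fin k, a ≠ b → 1 / ((j : ℝ) + 1) ≤ dist (x a) (x b)) ∧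
      ∀ a : Fin k, (⇑f)^[n] (x a) = x a ∧
        ∀ l : ℕ, 0 < l → l < n → 1 / ((i : ℝ) + 1) ≤ dist ((⇑f)^[l] (x a)) (x a)} := by
  set C : Set (C(X, X) × (Fin k → X)) :=
    {p | (∀ a b : Fin k, a ≠ b → 1 / ((j : ℝ) + 1) ≤ dist (p.2 a) (p.2 b)) ∧
      ∀ a : Fin k, (⇑p.1)^[n] (p.2 a) = p.2 a ∧
        ∀ l : ℕ, 0 < l → l < n → 1 / ((i : ℝ) + 1) ≤ dist ((⇑p.1)^[l] (p.2 a)) (p.2 a)} with hC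
  have hCclosed : IsClosed C := by
    have hcont : ∀ (l : ℕ) (a : Fin k),
        Continuous fun p : C(X, X) × (Fin k → X) => (⇑p.1)^[l] (p.2 a) := by
      intro l a
      exact (aux_iter_cont l).comp (continuous_fst.prodMk ((continuous_apply a).comp
        continuous_snd))
    rw [hC, Set.setOf_and]
    apply IsClosed.inter
    · simp only [Set.setOf_forall]
      refine isClosed_iInter fun a => isClosed_iInter fun b => isClosed_iInter fun _ => ?_
      exact isClosed_le continuous_const
        (Continuous.dist ((continuous_apply a).comp continuous_snd)
          ((continuous_apply b).comp continuous_snd))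
    · simp only [Set.setOf_forall, Set.setOf_and]
      refine isClosed_iInter fun a => IsClosed.inter ?_ ?_
      · exact isClosed_eq (hcont n a) ((continuous_apply a).comp continuous_snd)
      · refine isClosed_iInter fun l => isClosed_iInter fun _ => isClosed_iInter fun _ => ?_
        exact isClosed_le continuous_const
          ((hcont l a).dist ((continuous_apply a).comp continuous_snd))
  have himg : {f : C(X, X) | ∃ x : Fin k → X,
      (∀ a b : Fin k, a ≠ b → 1 / ((j : ℝ) + 1) ≤ dist (x a) (x b)) ∧
      ∀ a : Fin k, (⇑f)^[n] (x a) = x a ∧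
        ∀ l : ℕ, 0 < l → l < n → 1 / ((i : ℝ) + 1) ≤ dist ((⇑f)^[l] (x a)) (x a)}
      = Prod.fst '' C := by
    ext f
    simp only [Set.mem_setOf_eq, Set.mem_image, hC, Prod.exists]
    constructor
    · rintro ⟨x, h1, h2⟩; exact ⟨f, x, ⟨h1, h2⟩, rfl⟩
    · rintro ⟨g, x, ⟨h1, h2⟩, rfl⟩; exact ⟨x, h1, h2⟩
  rw [himg]
  exact isClosedMap_fst_of_compactSpace _ hCclosed

lemma aux_exists_finset_iff (f : C(X, X)) (k n : ℕ) :
    (∃ t : Finset X, t.card = k ∧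
      ↑t ⊆ {x : X | (⇑f)^[n] x = x ∧ ∀ l : ℕ, 0 < l → l < n → (⇑f)^[l] x ≠ x}) ↔
    ∃ i j : ℕ, ∃ x : Fin k → X,
      (∀ a b : Fin k, a ≠ b → 1 / ((j : ℝ) + 1) ≤ dist (x a) (x b)) ∧
      ∀ a : Fin k, (⇑f)^[n] (x a) = x a ∧
        ∀ l : ℕ, 0 < l → l < n → 1 / ((i : ℝ) + 1) ≤ dist ((⇑f)^[l] (x a)) (x a) := by
  constructor
  · rintro ⟨t, htc, hts⟩
    set x : Fin k → X := fun a => (t.equivFin.symm (Fin.cast htc.symm a) : X) with hx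
    have hxinj : Function.Injective x := by
      intro a b hab
      have := t.equivFin.symm.injective (Subtype.ext hab)
      simpa [Fin.ext_iff] using this
    have hxmem : ∀ a, x a ∈
        {x : X | (⇑f)^[n] x = x ∧ ∀ l : ℕ, 0 < l → l < n → (⇑f)^[l] x ≠ x} :=
      fun a => hts (t.equivFin.symm (Fin.cast htc.symm a)).2
    obtain ⟨i, hi⟩ := aux_exists_one_div_le
      ((Finset.univ : Finset (Fin k)) ×ˢ Finset.Ioo 0 n)
      (fun p => dist ((⇑f)^[p.2] (x p.1)) (x p.1))
      (by
        rintro ⟨a, l⟩ hal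
        simp only [Finset.mem_product, Finset.mem_Ioo] at hal
        exact dist_pos.2 ((hxmem a).2 l hal.2.1 hal.2.2))
    obtain ⟨j, hj⟩ := aux_exists_one_div_le
      (Finset.univ.filter fun p : Fin k × Fin k => p.1 ≠ p.2)
      (fun p => dist (x p.1) (x p.2))
      (by
        rintro ⟨a, b⟩ hab
        simp only [Finset.mem_filter] at hab
        exact dist_pos.2 fun h => hab.2 (hxinj h))
    refine ⟨i, j, x, fun a b hab => hj (a, b) (by simp [hab]), fun a =>
      ⟨(hxmem a).1, fun l hl1 hl2 => hi (a, l) (by simp [hl1, hl2])⟩⟩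
  · rintro ⟨i, j, x, hdist, hper⟩
    classical
    have hipos : (0 : ℝ) < 1 / ((i : ℝ) + 1) := by positivity
    have hjpos : (0 : ℝ) < 1 / ((j : ℝ) + 1) := by positivity
    have hxinj : Function.Injective x := by
      intro a b hab
      by_contra hne
      have := hdist a b hne
      rw [hab, dist_self] at this
      linarith
    refine ⟨Finset.univ.image x, ?_, ?_⟩
    · rw [Finset.card_image_of_injective _ hxinj, Finset.card_univ, Fintype.card_fin]
    · intro y hy
      simp only [Finset.coe_image, Set.mem_image, Finset.coe_univ, Set.mem_univ,
        true_and] at hy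
      obtain ⟨a, rfl⟩ := hy
      refine ⟨(hper a).1, fun l hl1 hl2 hfix => ?_⟩
      have := (hper a).2 l hl1 hl2
      rw [hfix, dist_self] at this
      linarith

end Top

/-- For a compact metric space `X` and `m, n : ℕ` with `n ≥ 1`, the set of continuous
self-maps of `X` having exactly `m` periodic points of least period `n` is Borel in
`C(X,X)`. -/
theorem finitely_many_periodic_points_borel
    (X : Type) [MetricSpace X] [CompactSpace X] (m n : ℕ) (hn : 1 ≤ n) :
    MeasurableSet[borel C(X, X)]
      {f : C(X, X) |
        {x : X | (⇑f)^[n] x = x ∧ ∀ k : ℕ, 0 < k → k < n → (⇑f)^[k] x ≠ x}.Finite ∧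
        {x : X | (⇑f)^[n] x = x ∧ ∀ k : ℕ, 0 < k → k < n → (⇑f)^[k] x ≠ x}.ncard = m} := by
  letI : MeasurableSpace C(X, X) := borel C(X, X)
  haveI : BorelSpace C(X, X) := ⟨rfl⟩
  have hA : ∀ k : ℕ, MeasurableSet {f : C(X, X) | ∃ t : Finset X, t.card = k ∧
      ↑t ⊆ {x : X | (⇑f)^[n] x = x ∧ ∀ l : ℕ, 0 < l → l < n → (⇑f)^[l] x ≠ x}} := by
    intro k
    have : {f : C(X, X) | ∃ t : Finset X, t.card = k ∧
        ↑t ⊆ {x : X | (⇑f)^[n] x = x ∧ ∀ l : ℕ, 0 < l → l < n → (⇑f)^[l] x ≠ x}}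
        = ⋃ i : ℕ, ⋃ j : ℕ, {f : C(X, X) | ∃ x : Fin k → X,
          (∀ a b : Fin k, a ≠ b → 1 / ((j : ℝ) + 1) ≤ dist (x a) (x b)) ∧
          ∀ a : Fin k, (⇑f)^[n] (x a) = x a ∧
            ∀ l : ℕ, 0 < l → l < n → 1 / ((i : ℝ) + 1) ≤ dist ((⇑f)^[l] (x a)) (x a)} := by
      ext f
      simp only [Set.mem_setOf_eq, Set.mem_iUnion]
      exact aux_exists_finset_iff f k n
    rw [this]
    exact MeasurableSet.iUnion fun i => MeasurableSet.iUnion fun j =>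
      (aux_K_closed k n i j).measurableSet
  have hset : {f : C(X, X) |
      {x : X | (⇑f)^[n] x = x ∧ ∀ k : ℕ, 0 < k → k < n → (⇑f)^[k] x ≠ x}.Finite ∧
      {x : X | (⇑f)^[n] x = x ∧ ∀ k : ℕ, 0 < k → k < n → (⇑f)^[k] x ≠ x}.ncard = m}
      = {f : C(X, X) | ∃ t : Finset X, t.card = m ∧
          ↑t ⊆ {x : X | (⇑f)^[n] x = x ∧ ∀ l : ℕ, 0 < l → l < n → (⇑f)^[l] x ≠ x}}
        \ {f : C(X, X) | ∃ t : Finset X, t.card = m + 1 ∧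
          ↑t ⊆ {x : X | (⇑f)^[n] x = x ∧ ∀ l : ℕ, 0 < l → l < n → (⇑f)^[l] x ≠ x}} := by
    ext f
    simp only [Set.mem_setOf_eq, Set.mem_diff]
    exact aux_card_char _ m
  rw [hset]
  exact (hA m).diff (hA (m + 1))
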